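/- The kernel of the Fokker–Planck operator Ã₂ on 2π-periodic C² functions is one-dimensional, spanned by w: one has Ã₂w(θ) = 0 for all θ, and conversely every 2π-periodic C² function v : ℝ → ℝ with Ã₂v(θ) = 0 for all θ satisfies v = (∫₀^{2π} v)·w. -/

import Mathlib

noncomputable section

open MeasureTheory

/-- `Ψ₀(x)`: the non-disordered fixed-point function. -/
def Psi0 (x : ℝ) : ℝ :=
  (∫ θ in (0:ℝ)..(2 * Real.pi), Real.cos θ * Real.exp (x * Real.cos θ)) /
    (∫ θ in (0:ℝ)..(2 * Real.pi), Real.exp (x * Real.cos θ))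

/-- The potential `Φ(θ) = −2Kr₀·cos θ`. -/
def Phi (K r₀ θ : ℝ) : ℝ := -2 * K * r₀ * Real.cos θ

/-- The weight `w(θ) = exp(−Φ(θ))/∫₀^{2π} exp(−Φ)`. -/
def w (K r₀ θ : ℝ) : ℝ :=
  Real.exp (-Phi K r₀ θ) / (∫ u in (0:ℝ)..(2 * Real.pi), Real.exp (-Phi K r₀ u))

/-- The Fokker–Planck operator `Ã₂v = (1/2)v'' + (Kr₀ sin(θ) v)'`. -/
def A2 (K r₀ : ℝ) (v : ℝ → ℝ) (θ : ℝ) : ℝ :=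
  (1 / 2) * deriv (deriv v) θ + deriv (fun u => K * r₀ * Real.sin u * v u) θ

/-- The `2π`-periodic primitive of a zero-mean `a`, normalized so that
`∫₀^{2π} 𝒜/k = 0` for the weight `k`. -/
def prim (k a : ℝ → ℝ) (θ : ℝ) : ℝ :=
  (∫ u in (0:ℝ)..θ, a u) -
    (∫ s in (0:ℝ)..(2 * Real.pi), (∫ u in (0:ℝ)..s, a u) / k s) /
      (∫ s in (0:ℝ)..(2 * Real.pi), 1 / k s)

/-- `v₀ = v − (∫₀^{2π} v)·w`, the zero-mean part of `v`. -/
def vz (K r₀ : ℝ) (v : ℝ → ℝ) (θ : ℝ) : ℝ :=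
  v θ - (∫ u in (0:ℝ)..(2 * Real.pi), v u) * w K r₀ θ

/-- The weighted Sobolev inner product `⟨u, v⟩_{−1,w}`. -/
def pairW (K r₀ : ℝ) (u v : ℝ → ℝ) : ℝ :=
  (∫ θ in (0:ℝ)..(2 * Real.pi), u θ) * (∫ θ in (0:ℝ)..(2 * Real.pi), v θ) +
    ∫ θ in (0:ℝ)..(2 * Real.pi),
      prim (w K r₀) (vz K r₀ u) θ * prim (w K r₀) (vz K r₀ v) θ / w K r₀ θ

lemma contPhi (K r₀ : ℝ) : Continuous (fun u => Real.exp (-Phi K r₀ u)) := by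
  unfold Phi; continuity

lemma contPhi' (K r₀ : ℝ) : Continuous (fun u => Real.exp (Phi K r₀ u)) := by
  unfold Phi; continuity

lemma hasDerivAt_expNegPhi (K r₀ θ : ℝ) :
    HasDerivAt (fun u => Real.exp (-Phi K r₀ u))
      (Real.exp (-Phi K r₀ θ) * (-(2 * K * r₀ * Real.sin θ))) θ := by
  have h1 : HasDerivAt (fun u : ℝ => -Phi K r₀ u) (-(2 * K * r₀ * Real.sin θ)) θ := by
    have h0 : HasDerivAt (fun u : ℝ => 2 * K * r₀ * Real.cos u)
        (2 * K * r₀ * (-Real.sin θ)) θ := (Real.hasDerivAt_cos θ).const_mul _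
    have he : (fun u : ℝ => -Phi K r₀ u) = fun u : ℝ => 2 * K * r₀ * Real.cos u := by
      funext u; simp [Phi]
    rw [he]; convert h0 using 1; try ring
  simpa using h1.exp

lemma hasDerivAt_expPhi (K r₀ θ : ℝ) :
    HasDerivAt (fun u => Real.exp (Phi K r₀ u))
      (Real.exp (Phi K r₀ θ) * (2 * K * r₀ * Real.sin θ)) θ := by
  have h1 : HasDerivAt (fun u : ℝ => Phi K r₀ u) (2 * K * r₀ * Real.sin θ) θ := by
    have h0 : HasDerivAt (fun u : ℝ => (-2 * K * r₀) * Real.cos u)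
        ((-2 * K * r₀) * (-Real.sin θ)) θ := (Real.hasDerivAt_cos θ).const_mul _
    have he : (fun u : ℝ => Phi K r₀ u) = fun u : ℝ => (-2 * K * r₀) * Real.cos u := by
      funext u; simp [Phi]
    rw [he]; convert h0 using 1; try ring
  simpa using h1.exp

lemma hasDerivAt_w (K r₀ θ : ℝ) :
    HasDerivAt (w K r₀) (-2 * (K * r₀ * Real.sin θ * w K r₀ θ)) θ := by
  have h := (hasDerivAt_expNegPhi K r₀ θ).div_const
    (∫ u in (0:ℝ)..(2 * Real.pi), Real.exp (-Phi K r₀ u))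
  have he : w K r₀ = fun θ => Real.exp (-Phi K r₀ θ) /
      (∫ u in (0:ℝ)..(2 * Real.pi), Real.exp (-Phi K r₀ u)) := rfl
  rw [he]
  convert h using 1
  exacts [rfl, rfl, by beta_reduce; ring]

theorem part1 (K r₀ : ℝ) : ∀ θ : ℝ, A2 K r₀ (w K r₀) θ = 0 := by
  intro θ
  have hderw : deriv (w K r₀) =
      fun u => (-2 : ℝ) * (K * r₀ * Real.sin u * w K r₀ u) := by
    funext u; exact (hasDerivAt_w K r₀ u).deriv
  have hdiff : DifferentiableAt ℝ (fun u => K * r₀ * Real.sin u * w K r₀ u) θ := by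
    exact ((Real.differentiable_sin θ).const_mul (K * r₀)).mul
      (hasDerivAt_w K r₀ θ).differentiableAt
  unfold A2
  rw [hderw, deriv_const_mul _ hdiff]
  ring

theorem part2 (K r₀ : ℝ) :
    ∀ v : ℝ → ℝ, ContDiff ℝ 2 v → Function.Periodic v (2 * Real.pi) →
      (∀ θ : ℝ, A2 K r₀ v θ = 0) →
      ∀ θ : ℝ, v θ = (∫ u in (0:ℝ)..(2 * Real.pi), v u) * w K r₀ θ := by
  intro v hv hper hker θ
  have hv1 : Differentiable ℝ v := hv.differentiable two_ne_zero
  have hdv : Differentiable ℝ (deriv v) := by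
    have h2 : ContDiff ℝ ((1:ℕ) + 1) v := by exact_mod_cast hv
    exact (contDiff_succ_iff_deriv.mp h2).2.2.differentiable one_ne_zero
  set h : ℝ → ℝ := fun u => (1/2) * deriv v u + K * r₀ * Real.sin u * v u with hh
  have hdiff_f : Differentiable ℝ (fun u => K * r₀ * Real.sin u * v u) :=
    (Real.differentiable_sin.const_mul (K * r₀)).mul hv1
  have hdiff_h : Differentiable ℝ h := (hdv.const_mul _).add hdiff_f
  have hderiv_h : ∀ x, deriv h x = 0 := by
    intro x
    have hstep : deriv h x = (1/2) * deriv (deriv v) x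
        + deriv (fun u => K * r₀ * Real.sin u * v u) x := by
      rw [hh]
      exact (((hdv x).hasDerivAt.const_mul _).add (hdiff_f x).hasDerivAt).deriv
    rw [hstep]; exact hker x
  have hconst : ∀ x, h x = h 0 := fun x =>
    is_const_of_deriv_eq_zero hdiff_h hderiv_h x 0
  set g : ℝ → ℝ := fun x => Real.exp (Phi K r₀ x) * v x with hg
  have hgd : ∀ x, HasDerivAt g (2 * Real.exp (Phi K r₀ x) * h 0) x := by
    intro x
    have hmul := (hasDerivAt_expPhi K r₀ x).mul (hv1 x).hasDerivAt
    have heq : Real.exp (Phi K r₀ x) * (2 * K * r₀ * Real.sin x) * v x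
        + Real.exp (Phi K r₀ x) * deriv v x = 2 * Real.exp (Phi K r₀ x) * h x := by
      rw [hh]; ring
    rw [hg, ← hconst x, ← heq]
    exact hmul
  have hint : IntervalIntegrable (fun x => 2 * Real.exp (Phi K r₀ x) * h 0)
      MeasureTheory.volume 0 (2 * Real.pi) :=
    (((continuous_const.mul (contPhi' K r₀)).mul continuous_const).intervalIntegrable _ _)
  have hftc := intervalIntegral.integral_eq_sub_of_hasDerivAt
      (f := g) (fun x _ => hgd x) hint
  have hgper : g (2 * Real.pi) = g 0 := by
    rw [hg]
    have h1 : Phi K r₀ (2 * Real.pi) = Phi K r₀ 0 := by simp [Phi, Real.cos_two_pi]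
    have h2 : v (2 * Real.pi) = v 0 := by simpa using hper 0
    simp only [h1, h2]
  rw [hgper, sub_self] at hftc
  have hIpos : (0:ℝ) < ∫ x in (0:ℝ)..(2 * Real.pi), Real.exp (Phi K r₀ x) := by
    apply intervalIntegral.intervalIntegral_pos_of_pos
    · exact (contPhi' K r₀).intervalIntegrable _ _
    · exact fun x => Real.exp_pos _
    · positivity
  have hh0 : h 0 = 0 := by
    have hre : (∫ x in (0:ℝ)..(2 * Real.pi), 2 * Real.exp (Phi K r₀ x) * h 0)
        = (2 * h 0) * ∫ x in (0:ℝ)..(2 * Real.pi), Real.exp (Phi K r₀ x) := by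
      rw [← intervalIntegral.integral_const_mul]
      congr 1; funext x; ring
    rw [hre] at hftc
    rcases mul_eq_zero.mp hftc with h' | h'
    · rcases mul_eq_zero.mp h' with h'' | h''
      · norm_num at h''
      · exact h''
    · exact absurd h' (ne_of_gt hIpos)
  have hgconst : ∀ x, g x = g 0 := by
    intro x
    apply is_const_of_deriv_eq_zero
    · intro y; exact (hgd y).differentiableAt
    · intro y
      have : HasDerivAt g 0 y := by simpa [hh0] using hgd y
      exact this.deriv
  have hv_eq : ∀ x, v x = g 0 * Real.exp (-Phi K r₀ x) := by
    intro x
    have h1 : Real.exp (Phi K r₀ x) * v x = g 0 := hgconst x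
    have h2 : Real.exp (-Phi K r₀ x) * (Real.exp (Phi K r₀ x) * v x) = v x := by
      rw [← mul_assoc, ← Real.exp_add]; simp
    rw [← h2, h1]; ring
  have hIeq : (∫ u in (0:ℝ)..(2 * Real.pi), v u)
      = g 0 * ∫ u in (0:ℝ)..(2 * Real.pi), Real.exp (-Phi K r₀ u) := by
    rw [← intervalIntegral.integral_const_mul]
    apply intervalIntegral.integral_congr
    intro x _; exact hv_eq x
  have hJpos : (0:ℝ) < ∫ u in (0:ℝ)..(2 * Real.pi), Real.exp (-Phi K r₀ u) := by
    apply intervalIntegral.intervalIntegral_pos_of_pos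
    · exact (contPhi K r₀).intervalIntegrable _ _
    · exact fun x => Real.exp_pos _
    · positivity
  rw [hIeq, hv_eq θ]
  unfold w
  field_simp

/-- The kernel of the Fokker–Planck operator on `2π`-periodic `C²` functions is
one-dimensional, spanned by the weight `w`. -/
theorem stmt14 (K r₀ : ℝ) (hK : 1 < K) (hr₀ : 0 < r₀) (hfix : r₀ = Psi0 (2 * K * r₀)) :
    (∀ θ : ℝ, A2 K r₀ (w K r₀) θ = 0) ∧
      ∀ v : ℝ → ℝ, ContDiff ℝ 2 v → Function.Periodic v (2 * Real.pi) →
        (∀ θ : ℝ, A2 K r₀ v θ = 0) →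
        ∀ θ : ℝ, v θ = (∫ u in (0:ℝ)..(2 * Real.pi), v u) * w K r₀ θ :=
  ⟨part1 K r₀, part2 K r₀⟩
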